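/- Let X and Y be nonempty sets. Let S be a set of maps X → X that is closed under composition and contains all constant maps X → X, and let T be a set of maps Y → Y that is closed under composition and contains all constant maps Y → Y. Let Φ : S → T be a bijection satisfying Φ(f ∘ g) = Φ(f) ∘ Φ(g) for all f, g ∈ S. Then there exists a bijection φ : X → Y such that Φ(f) = φ ∘ f ∘ φ⁻¹ for all f ∈ S. -/
import Mathlib


/-- Schreier's lemma. -/
theorem stmt0 {X Y : Type*} [Nonempty X] [Nonempty Y]
    (S : Set (X → X)) (T : Set (Y → Y))
    (hScomp : ∀ f ∈ S, ∀ g ∈ S, f ∘ g ∈ S)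
    (hSconst : ∀ x : X, (fun _ : X => x) ∈ S)
    (hTcomp : ∀ f ∈ T, ∀ g ∈ T, f ∘ g ∈ T)
    (hTconst : ∀ y : Y, (fun _ : Y => y) ∈ T)
    (Φ : (X → X) → (Y → Y))
    (hΦbij : Set.BijOn Φ S T)
    (hΦmul : ∀ f ∈ S, ∀ g ∈ S, Φ (f ∘ g) = Φ f ∘ Φ g) :
    ∃ φ : X → Y, Function.Bijective φ ∧
      ∀ f ∈ S, Φ f = φ ∘ f ∘ Function.invFun φ := by
  classical
  obtain ⟨y0⟩ := ‹Nonempty Y›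
  obtain ⟨x0⟩ := ‹Nonempty X›
  have hsurj : ∀ t ∈ T, ∃ g ∈ S, Φ g = t := fun t ht => hΦbij.2.2 ht
  -- Φ of a constant map is constant
  have key : ∀ x : X, ∀ y : Y, Φ (fun _ => x) y = Φ (fun _ => x) y0 := by
    intro x y
    obtain ⟨g, hg, hΦg⟩ := hsurj _ (hTconst y)
    have h1 : Φ ((fun _ : X => x) ∘ g) = Φ (fun _ => x) ∘ Φ g :=
      hΦmul _ (hSconst x) g hg
    have h2 : ((fun _ : X => x) ∘ g) = (fun _ : X => x) := rfl
    rw [h2, hΦg] at h1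
    exact (congrFun h1 y0).symm
  set φ : X → Y := fun x => Φ (fun _ => x) y0 with hφ
  have hphi : ∀ x : X, Φ (fun _ : X => x) = fun _ : Y => φ x := by
    intro x; funext y; exact key x y
  have hinj : Function.Injective φ := by
    intro x x' h
    have heq : Φ (fun _ : X => x) = Φ (fun _ : X => x') := by
      rw [hphi, hphi, h]
    have := hΦbij.2.1 (hSconst x) (hSconst x') heq
    exact congrFun this x0
  have hsurjφ : Function.Surjective φ := by
    intro y
    obtain ⟨g, hg, hΦg⟩ := hsurj _ (hTconst y)
    -- g is a constant map
    have hgc : g = fun _ : X => g x0 := by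
      have h1 : Φ (g ∘ (fun _ : X => x0)) = Φ g ∘ Φ (fun _ : X => x0) :=
        hΦmul g hg _ (hSconst x0)
      have h2 : Φ g ∘ Φ (fun _ : X => x0) = Φ g := by
        rw [hΦg]; rfl
      rw [h2] at h1
      have := hΦbij.2.1 (hScomp g hg _ (hSconst x0)) hg h1
      exact this.symm
    refine ⟨g x0, ?_⟩
    have : Φ (fun _ : X => g x0) = fun _ : Y => y := by rw [← hgc, hΦg]
    have := congrFun this y0
    simpa [hφ] using this
  have hcomm : ∀ f ∈ S, ∀ x : X, Φ f (φ x) = φ (f x) := by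
    intro f hf x
    have h1 : Φ (f ∘ (fun _ : X => x)) = Φ f ∘ Φ (fun _ : X => x) :=
      hΦmul f hf _ (hSconst x)
    have h2 : (f ∘ (fun _ : X => x)) = (fun _ : X => f x) := rfl
    rw [h2, hphi, hphi] at h1
    exact (congrFun h1 y0).symm
  refine ⟨φ, ⟨hinj, hsurjφ⟩, ?_⟩
  intro f hf
  funext y
  have hy : φ (Function.invFun φ y) = y := Function.rightInverse_invFun hsurjφ y
  calc Φ f y = Φ f (φ (Function.invFun φ y)) := by rw [hy]
    _ = φ (f (Function.invFun φ y)) := hcomm f hf _
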